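/- Let G=(A,B,E) be a finite bipartite graph with nonnegative real edge weights w(a,b), capacities q(a)=∑_{b∈N(a)} w(a,b), and client weights w(b) ≤ ∑_{a∈N(b)} w(a,b). Let f:B→A be any assignment with f(b)∈N(b). Define A₀ = {a : ∑_{b:f(b)=a} w(b) > q(a) + max_b w(b)}, B₀ = f⁻¹(A₀), and inductively A_i = N(B_{i−1}) \ ⋃_{j<i} A_j, B_i = f⁻¹(A_i). If A₀ is nonempty, then there exists some i ≥ 1 and a facility a ∈ A_i with ∑_{b:f(b)=a} w(b) ≤ q(a). -/

import Mathlib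

/-- Key invariant in the proof of the reassignment lemma: given any feasible
assignment `f`, define the level sets `A₀ = {a : load a > q a + max_b wb b}`,
`B i = f⁻¹(A i)`, `A (i+1) = N(B i) \ ⋃_{j ≤ i} A j`.  If `A₀` is nonempty,
then some facility at a level `i ≥ 1` is underloaded (`load a ≤ q a`). -/
theorem stmt_1 {A B : Type} [Fintype A] [Fintype B] [DecidableEq A] [Nonempty B]
    (adj : A → B → Prop) [∀ a b, Decidable (adj a b)]
    (w : A → B → ℝ) (hw : ∀ a b, 0 ≤ w a b)
    (wb : B → ℝ) (hwb0 : ∀ b, 0 ≤ wb b)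
    (hwb : ∀ b, wb b ≤ ∑ a ∈ Finset.univ.filter (fun a => adj a b), w a b)
    (f : B → A) (hf : ∀ b, adj (f b) b)
    (Asets : ℕ → Finset A) (Bsets : ℕ → Finset B)
    (hA0 : ∀ a, a ∈ Asets 0 ↔
      (∑ b ∈ Finset.univ.filter (fun b => adj a b), w a b) +
        Finset.univ.sup' Finset.univ_nonempty wb <
        (∑ b ∈ Finset.univ.filter (fun b => f b = a), wb b))
    (hB : ∀ i b, b ∈ Bsets i ↔ f b ∈ Asets i)
    (hAsucc : ∀ i a, a ∈ Asets (i + 1) ↔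
      ((∃ b ∈ Bsets i, adj a b) ∧ ∀ j ≤ i, a ∉ Asets j))
    (hne : (Asets 0).Nonempty) :
    ∃ i, 1 ≤ i ∧ ∃ a ∈ Asets i,
      (∑ b ∈ Finset.univ.filter (fun b => f b = a), wb b) ≤
        ∑ b ∈ Finset.univ.filter (fun b => adj a b), w a b := by
  classical
  by_contra hcon
  push_neg at hcon
  -- levels are "disjoint": higher levels avoid lower ones
  have key : ∀ i j, i < j → ∀ a, a ∈ Asets j → a ∉ Asets i := by
    intro i j hij a haj
    cases j with
    | zero => omega
    | succ k => exact ((hAsucc k a).1 haj).2 i (Nat.lt_succ_iff.mp hij)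
  -- some level is empty
  obtain ⟨m, hm⟩ : ∃ m, Asets m = ∅ := by
    by_contra h
    push_neg at h
    have h' : ∀ m, (Asets m).Nonempty := fun m => h m
    choose g hg using h'
    obtain ⟨i, j, hij, hgij⟩ := Finite.exists_ne_map_eq_of_infinite g
    rcases lt_or_gt_of_ne hij with h1 | h1
    · exact key i j h1 (g j) (hg j) (hgij ▸ hg i)
    · exact key j i h1 (g i) (hg i) (hgij ▸ hg j)
  have hm1 : 1 ≤ m := by
    rcases Nat.eq_zero_or_pos m with h | h
    · subst h; exact absurd hm (Finset.nonempty_iff_ne_empty.1 hne)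
    · exact h
  set SA : Finset A := (Finset.range m).biUnion Asets with hSA
  set SB : Finset B := Finset.univ.filter (fun b => f b ∈ SA) with hSB
  -- all neighbors of clients in SB are in SA
  have hnbr : ∀ b ∈ SB, ∀ a, adj a b → a ∈ SA := by
    intro b hb a hab
    rw [hSB, Finset.mem_filter] at hb
    obtain ⟨i, hi, hfb⟩ := Finset.mem_biUnion.1 hb.2
    rw [Finset.mem_range] at hi
    have hbB : b ∈ Bsets i := (hB i b).2 hfb
    have : ∃ j ≤ i + 1, a ∈ Asets j := by
      by_cases hcase : ∃ j ≤ i, a ∈ Asets j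
      · obtain ⟨j, hj, hja⟩ := hcase
        exact ⟨j, Nat.le_succ_of_le hj, hja⟩
      · push_neg at hcase
        exact ⟨i + 1, le_refl _, (hAsucc i a).2 ⟨⟨b, hbB, hab⟩, hcase⟩⟩
    obtain ⟨j, hj, hja⟩ := this
    have hjm : j < m := by
      rcases lt_or_eq_of_le (show j ≤ m by omega) with h | h
      · exact h
      · subst h; rw [hm] at hja; exact absurd hja (Finset.notMem_empty a)
    exact Finset.mem_biUnion.2 ⟨j, Finset.mem_range.2 hjm, hja⟩
  -- every facility in SA is overloaded
  have hover : ∀ a ∈ SA,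
      (∑ b ∈ Finset.univ.filter (fun b => adj a b), w a b) <
        ∑ b ∈ Finset.univ.filter (fun b => f b = a), wb b := by
    intro a ha
    obtain ⟨i, hi, hai⟩ := Finset.mem_biUnion.1 ha
    cases i with
    | zero =>
      have hM : (0:ℝ) ≤ Finset.univ.sup' Finset.univ_nonempty wb := by
        have b0 := Classical.arbitrary B
        exact le_trans (hwb0 b0) (Finset.le_sup' wb (Finset.mem_univ b0))
      have := (hA0 a).1 hai
      linarith
    | succ k => exact hcon (k + 1) (Nat.succ_le_succ (Nat.zero_le k)) a hai
  -- now the counting argument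
  set load : A → ℝ := fun a => ∑ b ∈ Finset.univ.filter (fun b => f b = a), wb b with hload
  set q : A → ℝ := fun a => ∑ b ∈ Finset.univ.filter (fun b => adj a b), w a b with hq
  have hSAne : SA.Nonempty := by
    obtain ⟨a, ha⟩ := hne
    exact ⟨a, Finset.mem_biUnion.2 ⟨0, Finset.mem_range.2 hm1, ha⟩⟩
  -- (6) sum of loads over SA equals sum of wb over SB
  have h6 : ∑ a ∈ SA, load a = ∑ b ∈ SB, wb b := by
    rw [show (∑ a ∈ SA, load a) =
        ∑ a ∈ SA, ∑ b ∈ SB.filter (fun b => f b = a), wb b from ?_]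
    · exact Finset.sum_fiberwise_of_maps_to
        (fun b hb => (Finset.mem_filter.1 hb).2) wb
    · refine Finset.sum_congr rfl fun a ha => ?_
      refine Finset.sum_congr ?_ fun _ _ => rfl
      ext b
      simp only [Finset.mem_filter, Finset.mem_univ, true_and, hSB]
      constructor
      · intro hb; exact ⟨hb ▸ ha, hb⟩
      · intro hb; exact hb.2
  -- (1)-(2): L ≤ ∑_{b∈SB} ∑_{a∈SA, adj a b} w a b
  have h12 : ∑ b ∈ SB, wb b ≤ ∑ b ∈ SB, ∑ a ∈ SA.filter (fun a => adj a b), w a b := by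
    refine Finset.sum_le_sum fun b hb => ?_
    refine le_trans (hwb b) (le_of_eq ?_)
    refine Finset.sum_congr ?_ fun _ _ => rfl
    ext a
    simp only [Finset.mem_filter, Finset.mem_univ, true_and]
    constructor
    · intro hab; exact ⟨hnbr b hb a hab, hab⟩
    · intro hab; exact hab.2
  -- (3)-(4): swap and extend
  have h34 : ∑ b ∈ SB, ∑ a ∈ SA.filter (fun a => adj a b), w a b ≤ ∑ a ∈ SA, q a := by
    have hswap : ∑ b ∈ SB, ∑ a ∈ SA.filter (fun a => adj a b), w a b
        = ∑ a ∈ SA, ∑ b ∈ SB.filter (fun b => adj a b), w a b := by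
      simp only [Finset.sum_filter]
      exact Finset.sum_comm
    rw [hswap]
    refine Finset.sum_le_sum fun a _ => ?_
    refine Finset.sum_le_sum_of_subset_of_nonneg ?_ (fun b _ _ => hw a b)
    intro b hb
    simp only [Finset.mem_filter, Finset.mem_univ, true_and] at hb ⊢
    exact hb.2
  -- (5): strict inequality
  have h5 : ∑ a ∈ SA, q a < ∑ a ∈ SA, load a :=
    Finset.sum_lt_sum_of_nonempty hSAne fun a ha => hover a ha
  have : ∑ b ∈ SB, wb b < ∑ b ∈ SB, wb b := by
    calc ∑ b ∈ SB, wb b ≤ _ := h12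
      _ ≤ ∑ a ∈ SA, q a := h34
      _ < ∑ a ∈ SA, load a := h5
      _ = ∑ b ∈ SB, wb b := h6
  exact lt_irrefl _ this
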